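/- Second-order heavy-traffic behaviour of the Wardrop split in a duopoly: let N, k ∈ ℕ with N/2 ≤ k ≤ N − 1. For each Λ > 0 let λ₁(Λ) be the unique number in (0, Λ) satisfying B(k, λ₁(Λ)) = B(N − k, Λ − λ₁(Λ)). Then λ₁(Λ)/k − (Λ − λ₁(Λ))/(N − k) → 1/(N − k) − 1/k as Λ → ∞. -/

import Mathlib

open Filter

/-- The Erlang-B blocking probability with `M` servers and offered load `a`:
`B(M, a) = (a^M / M!) / (∑_{j=0}^{M} a^j / j!)`. -/
noncomputable def ErlangB (M : ℕ) (a : ℝ) : ℝ :=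
  (a ^ M / (Nat.factorial M : ℝ)) / (∑ j ∈ Finset.range (M + 1), a ^ j / (Nat.factorial j : ℝ))

namespace Wardrop

open Finset

noncomputable def c (M i : ℕ) : ℝ := (Nat.factorial M : ℝ) / (Nat.factorial (M - i) : ℝ)

noncomputable def F (M : ℕ) (a : ℝ) : ℝ := ∑ i ∈ range (M + 1), c M i * (a⁻¹) ^ i

lemma c_nonneg (M i : ℕ) : 0 ≤ c M i :=
  div_nonneg (Nat.cast_nonneg _) (Nat.cast_nonneg _)

lemma c_zero (M : ℕ) : c M 0 = 1 := by
  simp only [c, Nat.sub_zero]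
  exact div_self (by exact_mod_cast M.factorial_pos.ne')

lemma c_one {M : ℕ} (hM : 1 ≤ M) : c M 1 = M := by
  obtain ⟨n, rfl⟩ : ∃ n, M = n + 1 := ⟨M - 1, by omega⟩
  simp [c, Nat.factorial_succ]
  rw [mul_div_assoc, div_self (by positivity), mul_one]

lemma c_two {M : ℕ} (hM : 2 ≤ M) : c M 2 = (M : ℝ) * ((M : ℝ) - 1) := by
  obtain ⟨n, rfl⟩ : ∃ n, M = n + 2 := ⟨M - 2, by omega⟩
  simp [c, Nat.factorial_succ]
  push_cast
  have : (n.factorial : ℝ) ≠ 0 := by exact_mod_cast n.factorial_pos.ne'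
  field_simp
  ring

lemma sumlim (d : ℕ → ℝ) (n : ℕ) :
    Tendsto (fun a : ℝ => ∑ i ∈ range n, d i * (a⁻¹) ^ i) atTop
      (nhds (∑ i ∈ range n, d i * (0:ℝ) ^ i)) :=
  tendsto_finset_sum _ fun i _ => tendsto_const_nhds.mul (tendsto_inv_atTop_zero.pow i)

lemma sum_zero_pow (d : ℕ → ℝ) (n : ℕ) :
    (∑ i ∈ range (n + 1), d i * (0:ℝ) ^ i) = d 0 := by
  rw [Finset.sum_range_succ']
  simp

lemma stepdown (d : ℕ → ℝ) (n : ℕ) {a : ℝ} (ha : a ≠ 0) :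
    a * ((∑ i ∈ range (n + 1), d i * (a⁻¹) ^ i) - d 0) =
      ∑ i ∈ range n, d (i + 1) * (a⁻¹) ^ i := by
  rw [Finset.sum_range_succ']
  simp only [pow_zero, mul_one, add_sub_cancel_right, Finset.mul_sum]
  refine Finset.sum_congr rfl fun i _ => ?_
  rw [pow_succ]
  field_simp


lemma h0 (M : ℕ) : Tendsto (F M) atTop (nhds 1) := by
  have := sumlim (c M) (M + 1)
  rwa [sum_zero_pow, c_zero] at this

lemma h1 {M : ℕ} (hM : 1 ≤ M) :
    Tendsto (fun a : ℝ => a * (F M a - 1)) atTop (nhds (M : ℝ)) := by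
  obtain ⟨n, rfl⟩ : ∃ n, M = n + 1 := ⟨M - 1, by omega⟩
  have hev : (fun a : ℝ => a * (F (n+1) a - 1)) =ᶠ[atTop]
      (fun a : ℝ => ∑ i ∈ range (n + 1), c (n+1) (i + 1) * (a⁻¹) ^ i) := by
    filter_upwards [eventually_gt_atTop (0:ℝ)] with a ha
    rw [← stepdown (c (n+1)) (n+1) ha.ne', c_zero]
    rfl
  have := sumlim (fun i => c (n+1) (i + 1)) (n + 1)
  rw [sum_zero_pow] at this
  rw [c_one (by omega)] at this
  exact Tendsto.congr' hev.symm this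

lemma h2 {M : ℕ} (hM : 1 ≤ M) :
    Tendsto (fun a : ℝ => a * (a * (F M a - 1) - M)) atTop
      (nhds ((M : ℝ) * ((M : ℝ) - 1))) := by
  obtain ⟨n, rfl⟩ : ∃ n, M = n + 1 := ⟨M - 1, by omega⟩
  have hev : (fun a : ℝ => a * (a * (F (n+1) a - 1) - ((n+1 : ℕ) : ℝ))) =ᶠ[atTop]
      (fun a : ℝ => ∑ i ∈ range n, c (n+1) (i + 2) * (a⁻¹) ^ i) := by
    filter_upwards [eventually_gt_atTop (0:ℝ)] with a ha
    have e1 : a * (F (n+1) a - 1) = ∑ i ∈ range (n+1), c (n+1) (i + 1) * (a⁻¹) ^ i := by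
      rw [← stepdown (c (n+1)) (n+1) ha.ne', c_zero]; rfl
    rw [e1, show ((n+1 : ℕ) : ℝ) = c (n+1) 1 from (c_one (by omega)).symm,
      ← stepdown (fun i => c (n+1) (i+1)) n ha.ne']
  have := sumlim (fun i => c (n+1) (i + 2)) n
  refine Tendsto.congr' hev.symm ?_
  rcases Nat.eq_zero_or_pos n with rfl | hn
  · simpa using this
  · obtain ⟨p, rfl⟩ : ∃ p, n = p + 1 := ⟨n - 1, by omega⟩
    rw [sum_zero_pow] at this
    rwa [c_two (by omega)] at this

lemma F_gt_one {M : ℕ} (hM : 1 ≤ M) {a : ℝ} (ha : 0 < a) : 1 < F M a := by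
  unfold F
  rw [Finset.sum_range_succ']
  simp only [pow_zero, mul_one, c_zero]
  have : 0 < ∑ i ∈ range M, c M (i + 1) * (a⁻¹) ^ (i + 1) := by
    apply Finset.sum_pos'
    · intro i _
      exact mul_nonneg (c_nonneg _ _) (by positivity)
    · refine ⟨0, Finset.mem_range.2 (by omega), ?_⟩
      rw [c_one hM]
      have : (0:ℝ) < M := by exact_mod_cast hM
      positivity
  linarith

lemma F_antitone (M : ℕ) {a b : ℝ} (ha : 0 < a) (hab : a ≤ b) : F M b ≤ F M a := by
  apply Finset.sum_le_sum
  intro i _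
  apply mul_le_mul_of_nonneg_left _ (c_nonneg _ _)
  have hb : 0 < b := lt_of_lt_of_le ha hab
  exact pow_le_pow_left₀ (inv_nonneg.2 hb.le) (inv_anti₀ ha hab) i

lemma sum_pos (M : ℕ) {a : ℝ} (ha : 0 < a) :
    0 < ∑ j ∈ Finset.range (M + 1), a ^ j / (Nat.factorial j : ℝ) := by
  apply Finset.sum_pos'
  · intro j _; positivity
  · exact ⟨0, Finset.mem_range.2 (by omega), by simp⟩

lemma ErlangB_pos (M : ℕ) {a : ℝ} (ha : 0 < a) : 0 < ErlangB M a := by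
  unfold ErlangB
  have h1 : 0 < a ^ M / (Nat.factorial M : ℝ) := by positivity
  exact div_pos h1 (sum_pos M ha)

lemma F_eq (M : ℕ) {a : ℝ} (ha : 0 < a) : F M a = (ErlangB M a)⁻¹ := by
  have key : F M a = ((Nat.factorial M : ℝ) / a ^ M) *
      ∑ j ∈ Finset.range (M + 1), a ^ j / (Nat.factorial j : ℝ) := by
    unfold F
    rw [← Finset.sum_range_reflect, Finset.mul_sum]
    refine Finset.sum_congr rfl fun j hj => ?_
    rw [Finset.mem_range] at hj
    have hj' : j ≤ M := by omega
    have h1 : M + 1 - 1 - j = M - j := by omega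
    rw [h1]
    unfold c
    have h2 : M - (M - j) = j := by omega
    rw [h2]
    have hfj : (Nat.factorial j : ℝ) ≠ 0 := by exact_mod_cast j.factorial_pos.ne'
    have hpow : a ^ j * a ^ (M - j) = a ^ M := by
      rw [← pow_add]; congr 1; omega
    have haj : a ^ (M - j) ≠ 0 := by positivity
    rw [inv_pow]
    field_simp
    rw [← hpow]; ring
  rw [key]
  unfold ErlangB
  have hS := (sum_pos M ha).ne'
  have hfa : (M.factorial : ℝ) ≠ 0 := by exact_mod_cast M.factorial_pos.ne'
  have hpa : a ^ M ≠ 0 := by positivity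
  field_simp


lemma tendsto_x (k m : ℕ) (hk : 1 ≤ k) (hm : 1 ≤ m) (x y : ℝ → ℝ)
    (hx : ∀ Λ : ℝ, 0 < Λ → 0 < x Λ)
    (hxy : ∀ Λ : ℝ, 0 < Λ → x Λ + y Λ = Λ)
    (heq : ∀ Λ : ℝ, 0 < Λ → F k (x Λ) = F m (y Λ)) :
    Tendsto x atTop atTop := by
  rw [tendsto_atTop]
  intro C
  set C' : ℝ := max C 1 with hC'
  have hC'pos : (0:ℝ) < C' := lt_of_lt_of_le one_pos (le_max_right _ _)
  have hδ : 1 < F k C' := F_gt_one hk hC'pos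
  have hev : ∀ᶠ a in atTop, F m a < F k C' := (h0 m).eventually_lt_const hδ
  obtain ⟨D, hD⟩ := eventually_atTop.1 hev
  filter_upwards [eventually_gt_atTop (0:ℝ),
    eventually_ge_atTop (C' + max D 0 + 1)] with Λ hΛ hge
  by_contra h
  push_neg at h
  have h1 : x Λ ≤ C' := le_trans h.le (le_max_left _ _)
  have hy : y Λ = Λ - x Λ := by have := hxy Λ hΛ; linarith
  have hyD : D ≤ y Λ := by
    have := le_max_left D (0:ℝ); linarith
  have habs : F m (y Λ) < F k C' := hD _ hyD
  have hle : F k C' ≤ F k (x Λ) := F_antitone k (hx Λ hΛ) h1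
  have := heq Λ hΛ
  linarith


end Wardrop

open Wardrop

/-- Second-order heavy-traffic behaviour of the Wardrop split in a duopoly: let
`N, k ∈ ℕ` with `N/2 ≤ k ≤ N − 1`.  For each `Λ > 0` let `λ₁(Λ)` be the (unique)
number in `(0, Λ)` satisfying `B(k, λ₁(Λ)) = B(N − k, Λ − λ₁(Λ))`.  Then
`λ₁(Λ)/k − (Λ − λ₁(Λ))/(N − k) → 1/(N − k) − 1/k` as `Λ → ∞`. -/
theorem wardrop_duopoly_heavy_traffic_second_order (N k : ℕ)
    (hk₁ : (N : ℝ) / 2 ≤ (k : ℝ)) (hk₂ : k + 1 ≤ N)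
    (lam₁ : ℝ → ℝ)
    (hlam : ∀ Λ : ℝ, 0 < Λ → lam₁ Λ ∈ Set.Ioo 0 Λ ∧
      ErlangB k (lam₁ Λ) = ErlangB (N - k) (Λ - lam₁ Λ)) :
    Tendsto (fun Λ => lam₁ Λ / (k : ℝ) - (Λ - lam₁ Λ) / ((N - k : ℕ) : ℝ)) atTop
      (nhds (1 / ((N - k : ℕ) : ℝ) - 1 / (k : ℝ))) := by
  set m : ℕ := N - k with hmdef
  have hm1 : 1 ≤ m := by omega
  have hk1 : 1 ≤ k := by
    have hN2 : (N : ℝ) ≤ 2 * k := by linarith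
    have : N ≤ 2 * k := by exact_mod_cast hN2
    omega
  have hkR : (0:ℝ) < (k:ℝ) := by exact_mod_cast hk1
  have hmR : (0:ℝ) < (m:ℝ) := by exact_mod_cast hm1
  set y : ℝ → ℝ := fun Λ => Λ - lam₁ Λ with hy
  have hpos₁ : ∀ Λ : ℝ, 0 < Λ → 0 < lam₁ Λ := fun Λ h => (hlam Λ h).1.1
  have hpos₂ : ∀ Λ : ℝ, 0 < Λ → 0 < y Λ := fun Λ h => sub_pos.2 (hlam Λ h).1.2
  have hFeq : ∀ Λ : ℝ, 0 < Λ → F k (lam₁ Λ) = F m (y Λ) := by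
    intro Λ h
    rw [F_eq k (hpos₁ Λ h), F_eq m (hpos₂ Λ h)]
    exact congrArg Inv.inv (hlam Λ h).2
  have hT1 : Tendsto lam₁ atTop atTop :=
    tendsto_x k m hk1 hm1 lam₁ y hpos₁ (fun Λ _ => by simp [hy]) hFeq
  have hT2 : Tendsto y atTop atTop :=
    tendsto_x m k hm1 hk1 y lam₁ hpos₂ (fun Λ _ => by simp [hy])
      (fun Λ h => (hFeq Λ h).symm)
  set u : ℝ → ℝ := fun Λ => F k (lam₁ Λ) - 1 with hu
  -- basic limits
  have hA : Tendsto (fun Λ => lam₁ Λ * u Λ) atTop (nhds (k:ℝ)) := (h1 hk1).comp hT1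
  have hB : Tendsto (fun Λ => y Λ * u Λ) atTop (nhds (m:ℝ)) := by
    refine Tendsto.congr' ?_ ((h1 hm1).comp hT2)
    filter_upwards [eventually_gt_atTop (0:ℝ)] with Λ hΛ
    simp only [Function.comp, hu, hFeq Λ hΛ]
  have hP : Tendsto (fun Λ => lam₁ Λ * (lam₁ Λ * u Λ - (k:ℝ))) atTop
      (nhds ((k:ℝ) * ((k:ℝ) - 1))) := (h2 hk1).comp hT1
  have hQ : Tendsto (fun Λ => y Λ * (y Λ * u Λ - (m:ℝ))) atTop
      (nhds ((m:ℝ) * ((m:ℝ) - 1))) := by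
    refine Tendsto.congr' ?_ ((h2 hm1).comp hT2)
    filter_upwards [eventually_gt_atTop (0:ℝ)] with Λ hΛ
    simp only [Function.comp, hu, hFeq Λ hΛ]
  have hupos : ∀ Λ : ℝ, 0 < Λ → 0 < u Λ :=
    fun Λ h => sub_pos.2 (F_gt_one hk1 (hpos₁ Λ h))
  have hR : Tendsto (fun Λ => lam₁ Λ / y Λ) atTop (nhds ((k:ℝ)/(m:ℝ))) := by
    refine Tendsto.congr' ?_ (hA.div hB hmR.ne')
    filter_upwards [eventually_gt_atTop (0:ℝ)] with Λ hΛ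
    simp only [Pi.div_apply]
    exact mul_div_mul_right _ _ (hupos Λ hΛ).ne'
  have hG : Tendsto (fun Λ =>
      (((m:ℝ) * (lam₁ Λ * (lam₁ Λ * u Λ - (k:ℝ)))
        - (k:ℝ) * (lam₁ Λ / y Λ) * (y Λ * (y Λ * u Λ - (m:ℝ)))) / (lam₁ Λ * u Λ))
        / ((k:ℝ) * (m:ℝ))) atTop
      (nhds ((((m:ℝ) * ((k:ℝ) * ((k:ℝ)-1))
        - (k:ℝ) * ((k:ℝ)/(m:ℝ)) * ((m:ℝ) * ((m:ℝ)-1))) / (k:ℝ)) / ((k:ℝ) * (m:ℝ)))) := by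
    exact (((tendsto_const_nhds.mul hP).sub
      ((tendsto_const_nhds.mul hR).mul hQ)).div hA hkR.ne').div_const _
  have hval : ((((m:ℝ) * ((k:ℝ) * ((k:ℝ)-1))
      - (k:ℝ) * ((k:ℝ)/(m:ℝ)) * ((m:ℝ) * ((m:ℝ)-1))) / (k:ℝ)) / ((k:ℝ) * (m:ℝ)))
      = 1 / ((m:ℕ):ℝ) - 1 / (k:ℝ) := by
    field_simp
    ring
  rw [← hval]
  refine Tendsto.congr' ?_ hG
  filter_upwards [eventually_gt_atTop (0:ℝ)] with Λ hΛ
  have hl := hpos₁ Λ hΛ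
  have hyp := hpos₂ Λ hΛ
  have hup := hupos Λ hΛ
  show _ = lam₁ Λ / (k : ℝ) - y Λ / (m : ℝ)
  field_simp
  ring
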